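/- Let Q be a generalised quadrangle with point-line incidence graph Γ, let C be a code in Γ with minimum distance δ equal to 3 or 4, and let p be a point of Q with p ∈ C. Then C is neighbour-transitive if and only if Aut(C) acts transitively on C and the stabiliser Aut(C)_p of p in Aut(C) acts transitively on the set of all lines of Q incident with p. -/

import Mathlib

/-- A finite generalised quadrangle of order `(s,t)`: each point is on `t+1` lines,
each line has `s+1` points, two distinct points lie on at most one common line,
two distinct lines meet in at most one common point, and for each non-incident
point-line pair `(p, ℓ)` there is a unique pair `(q, M)` with `p I M`, `q I M`
and `q I ℓ`. -/
structure GenQuad (P L : Type*) (s t : ℕ) where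
  I : P → L → Prop
  point_deg : ∀ p : P, Nat.card {ℓ : L // I p ℓ} = t + 1
  line_deg : ∀ ℓ : L, Nat.card {p : P // I p ℓ} = s + 1
  points_one_line : ∀ p₁ p₂ : P, p₁ ≠ p₂ → ∀ ℓ₁ ℓ₂ : L,
    I p₁ ℓ₁ → I p₂ ℓ₁ → I p₁ ℓ₂ → I p₂ ℓ₂ → ℓ₁ = ℓ₂
  lines_one_point : ∀ ℓ₁ ℓ₂ : L, ℓ₁ ≠ ℓ₂ → ∀ p₁ p₂ : P,
    I p₁ ℓ₁ → I p₁ ℓ₂ → I p₂ ℓ₁ → I p₂ ℓ₂ → p₁ = p₂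
  gq_axiom : ∀ (p : P) (ℓ : L), ¬ I p ℓ →
    ∃! qM : P × L, I p qM.2 ∧ I qM.1 qM.2 ∧ I qM.1 ℓ

/-- The point-line incidence graph of a generalised quadrangle. -/
def incGraph {P L : Type*} {s t : ℕ} (Q : GenQuad P L s t) : SimpleGraph (P ⊕ L) where
  Adj x y :=
    (∃ p ℓ, x = Sum.inl p ∧ y = Sum.inr ℓ ∧ Q.I p ℓ) ∨
    (∃ p ℓ, x = Sum.inr ℓ ∧ y = Sum.inl p ∧ Q.I p ℓ)
  symm := by
    constructor
    rintro x y (⟨p, ℓ, rfl, rfl, h⟩ | ⟨p, ℓ, rfl, rfl, h⟩)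
    · exact Or.inr ⟨p, ℓ, rfl, rfl, h⟩
    · exact Or.inl ⟨p, ℓ, rfl, rfl, h⟩
  loopless := by
    constructor
    rintro x (⟨p, ℓ, rfl, h, -⟩ | ⟨p, ℓ, rfl, h, -⟩) <;> exact absurd h (by simp)

/-- The minimum distance of a code `C` in a graph `Γ`. -/
noncomputable def minDist {V : Type*} (Γ : SimpleGraph V) (C : Set V) : ℕ :=
  sInf {d | ∃ x ∈ C, ∃ y ∈ C, x ≠ y ∧ Γ.dist x y = d}

/-- The distance from a vertex `γ` to a code `C`. -/
noncomputable def distToCode {V : Type*} (Γ : SimpleGraph V) (C : Set V) (γ : V) : ℕ :=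
  sInf {d | ∃ x ∈ C, Γ.dist γ x = d}

/-- The covering radius of a code `C` in a graph `Γ`. -/
noncomputable def covRad {V : Type*} (Γ : SimpleGraph V) (C : Set V) : ℕ :=
  sSup {d | ∃ γ : V, distToCode Γ C γ = d}

/-- `nbhd Γ C i` is the set `C_i` of vertices at distance exactly `i` from `C`. -/
def nbhd {V : Type*} (Γ : SimpleGraph V) (C : Set V) (i : ℕ) : Set V :=
  {γ | distToCode Γ C γ = i}

/-- `g` is an automorphism of the graph `Γ`. -/
def IsGraphAut {V : Type*} (Γ : SimpleGraph V) (g : V ≃ V) : Prop :=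
  ∀ x y : V, Γ.Adj (g x) (g y) ↔ Γ.Adj x y

/-- `Aut(C)` (automorphisms of `Γ` preserving `C` setwise) acts transitively on `S`. -/
def TransOn {V : Type*} (Γ : SimpleGraph V) (C S : Set V) : Prop :=
  ∀ x ∈ S, ∀ y ∈ S, ∃ g : V ≃ V, IsGraphAut Γ g ∧ (∀ v, g v ∈ C ↔ v ∈ C) ∧ g x = y

/-- `C` is neighbour-transitive: `Aut(C)` is transitive on `C` and on `C₁`. -/
def NeighbourTransitive {V : Type*} (Γ : SimpleGraph V) (C : Set V) : Prop :=
  TransOn Γ C C ∧ TransOn Γ C (nbhd Γ C 1)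

section Aux

variable {P L : Type*} [Finite P] [Finite L] {s t : ℕ} (Q : GenQuad P L s t)

lemma GenQuad.exists_line (p : P) : ∃ ℓ : L, Q.I p ℓ := by
  have h := Q.point_deg p
  have : Nonempty {ℓ : L // Q.I p ℓ} :=
    (Nat.card_pos_iff.mp (by omega)).1
  obtain ⟨ℓ, hℓ⟩ := this
  exact ⟨ℓ, hℓ⟩

lemma GenQuad.exists_point (ℓ : L) : ∃ p : P, Q.I p ℓ := by
  have h := Q.line_deg ℓ
  have : Nonempty {p : P // Q.I p ℓ} :=
    (Nat.card_pos_iff.mp (by omega)).1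
  obtain ⟨q, hq⟩ := this
  exact ⟨q, hq⟩

lemma adj_pl {p : P} {ℓ : L} (h : Q.I p ℓ) :
    (incGraph Q).Adj (Sum.inl p) (Sum.inr ℓ) :=
  Or.inl ⟨p, ℓ, rfl, rfl, h⟩

lemma reach_pl (p : P) (ℓ : L) :
    (incGraph Q).Reachable (Sum.inl p) (Sum.inr ℓ) := by
  by_cases h : Q.I p ℓ
  · exact (adj_pl Q h).reachable
  · obtain ⟨⟨q, M⟩, ⟨h1, h2, h3⟩, -⟩ := Q.gq_axiom p ℓ h
    exact ((adj_pl Q h1).reachable.trans (adj_pl Q h2).reachable.symm).trans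
      (adj_pl Q h3).reachable

lemma incGraph_preconnected : (incGraph Q).Preconnected := by
  rintro (p | ℓ) (q | m)
  · obtain ⟨ℓ, hℓ⟩ := Q.exists_line q
    exact (reach_pl Q p ℓ).trans (adj_pl Q hℓ).reachable.symm
  · exact reach_pl Q p m
  · exact (reach_pl Q q ℓ).symm
  · obtain ⟨q, hq⟩ := Q.exists_point m
    exact (reach_pl Q q ℓ).symm.trans (adj_pl Q hq).reachable

lemma IsGraphAut.symm {V : Type*} {Γ : SimpleGraph V} {g : V ≃ V}
    (h : IsGraphAut Γ g) : IsGraphAut Γ g.symm := by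
  intro x y
  have := h (g.symm x) (g.symm y)
  simpa using this.symm

end Aux

/-- For a code `C` with minimum distance `3` or `4` containing a point `p`,
`C` is neighbour-transitive iff `Aut(C)` is transitive on `C` and the stabiliser of `p`
is transitive on the lines through `p`. -/
theorem stmt2 {P L : Type*} [Finite P] [Finite L] {s t : ℕ}
    (Q : GenQuad P L s t) (hs : 1 ≤ s) (ht : 1 ≤ t)
    (C : Set (P ⊕ L))
    (hδ : minDist (incGraph Q) C = 3 ∨ minDist (incGraph Q) C = 4)
    (p : P) (hp : Sum.inl p ∈ C) :
    NeighbourTransitive (incGraph Q) C ↔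
      (TransOn (incGraph Q) C C ∧
        ∀ ℓ₁ ℓ₂ : L, Q.I p ℓ₁ → Q.I p ℓ₂ →
          ∃ g : (P ⊕ L) ≃ (P ⊕ L), IsGraphAut (incGraph Q) g ∧
            (∀ v, g v ∈ C ↔ v ∈ C) ∧
            g (Sum.inl p) = Sum.inl p ∧ g (Sum.inr ℓ₁) = Sum.inr ℓ₂) := by
  set Γ := incGraph Q with hΓ
  have hconn : Γ.Preconnected := incGraph_preconnected Q
  have hδ3 : 3 ≤ minDist Γ C := by rcases hδ with h | h <;> omega
  -- lines through p are not in C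
  have hnotC : ∀ ℓ : L, Q.I p ℓ → Sum.inr ℓ ∉ C := by
    intro ℓ hℓ hC
    have hadj : Γ.Adj (Sum.inr ℓ) (Sum.inl p) := (adj_pl Q hℓ).symm
    have hd1 : Γ.dist (Sum.inr ℓ) (Sum.inl p) = 1 :=
      SimpleGraph.dist_eq_one_iff_adj.mpr hadj
    have : minDist Γ C ≤ 1 :=
      Nat.sInf_le ⟨Sum.inr ℓ, hC, Sum.inl p, hp, by simp, hd1⟩
    omega
  -- lines through p are in C₁
  have hmem1 : ∀ ℓ : L, Q.I p ℓ → Sum.inr ℓ ∈ nbhd Γ C 1 := by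
    intro ℓ hℓ
    have hadj : Γ.Adj (Sum.inr ℓ) (Sum.inl p) := (adj_pl Q hℓ).symm
    have hd1 : Γ.dist (Sum.inr ℓ) (Sum.inl p) = 1 :=
      SimpleGraph.dist_eq_one_iff_adj.mpr hadj
    have h1 : (1 : ℕ) ∈ {d | ∃ x ∈ C, Γ.dist (Sum.inr ℓ) x = d} :=
      ⟨Sum.inl p, hp, hd1⟩
    have hle : sInf {d | ∃ x ∈ C, Γ.dist (Sum.inr ℓ) x = d} ≤ 1 := Nat.sInf_le h1
    have h0 : sInf {d | ∃ x ∈ C, Γ.dist (Sum.inr ℓ) x = d} ≠ 0 := by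
      intro h0
      have hmem := Nat.sInf_mem ⟨1, h1⟩
      rw [h0] at hmem
      obtain ⟨c, hc, hdc⟩ := hmem
      have := (hconn (Sum.inr ℓ) c).dist_eq_zero_iff.mp hdc
      rw [← this] at hc
      exact hnotC ℓ hℓ hc
    show sInf _ = 1
    omega
  constructor
  · rintro ⟨h1, h2⟩
    refine ⟨h1, ?_⟩
    intro ℓ₁ ℓ₂ hℓ₁ hℓ₂
    obtain ⟨g, hgaut, hgC, hgℓ⟩ :=
      h2 (Sum.inr ℓ₁) (hmem1 ℓ₁ hℓ₁) (Sum.inr ℓ₂) (hmem1 ℓ₂ hℓ₂)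
    refine ⟨g, hgaut, hgC, ?_, hgℓ⟩
    -- g maps p to a codeword adjacent to ℓ₂; minimum distance forces it to be p
    have hadj : Γ.Adj (g (Sum.inl p)) (Sum.inr ℓ₂) := by
      rw [← hgℓ]
      exact (hgaut _ _).mpr (adj_pl Q hℓ₁)
    rcases hadj with ⟨p', ℓ', hq, hℓeq, hI⟩ | ⟨p', ℓ', hq, hℓeq, hI⟩
    · -- g (inl p) = inl p' with p' I ℓ₂
      obtain rfl : ℓ' = ℓ₂ := by simpa using hℓeq.symm
      have hp'C : Sum.inl p' ∈ C := by rw [← hq]; exact (hgC _).mpr hp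
      rcases eq_or_ne p' p with rfl | hne
      · exact hq
      · exfalso
        have hd : Γ.dist (Sum.inl p') (Sum.inl p) ≤ 2 := by
          have := SimpleGraph.dist_le
            (SimpleGraph.Walk.cons (adj_pl Q hI)
              (SimpleGraph.Walk.cons ((adj_pl Q hℓ₂).symm) SimpleGraph.Walk.nil))
          simpa using this
        have hm : minDist Γ C ≤ Γ.dist (Sum.inl p') (Sum.inl p) :=
          Nat.sInf_le ⟨Sum.inl p', hp'C, Sum.inl p, hp, by simpa using hne, rfl⟩
        omega
    · exact absurd hℓeq (by simp)
  · rintro ⟨h1, h2⟩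
    refine ⟨h1, ?_⟩
    intro x hx y hy
    -- every element of C₁ is adjacent to a codeword
    have key : ∀ z ∈ nbhd Γ C 1, ∃ c ∈ C, Γ.Adj z c := by
      intro z hz
      have hz' : sInf {d | ∃ x ∈ C, Γ.dist z x = d} = 1 := hz
      have hne : {d | ∃ x ∈ C, Γ.dist z x = d}.Nonempty := by
        by_contra h
        rw [Set.not_nonempty_iff_eq_empty] at h
        rw [h, Nat.sInf_empty] at hz'
        omega
      have hmem := Nat.sInf_mem hne
      rw [hz'] at hmem
      obtain ⟨c, hc, hdc⟩ := hmem
      exact ⟨c, hc, SimpleGraph.dist_eq_one_iff_adj.mp hdc⟩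
    obtain ⟨cx, hcx, haxc⟩ := key x hx
    obtain ⟨cy, hcy, hayc⟩ := key y hy
    obtain ⟨g₁, hg₁aut, hg₁C, hg₁⟩ := h1 cx hcx (Sum.inl p) hp
    obtain ⟨g₂, hg₂aut, hg₂C, hg₂⟩ := h1 cy hcy (Sum.inl p) hp
    -- g₁ x is a line through p
    have hx' : Γ.Adj (g₁ x) (Sum.inl p) := by
      rw [← hg₁]; exact (hg₁aut _ _).mpr haxc
    have hy' : Γ.Adj (g₂ y) (Sum.inl p) := by
      rw [← hg₂]; exact (hg₂aut _ _).mpr hayc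
    obtain ⟨ℓ, hℓp, hg₁x⟩ : ∃ ℓ : L, Q.I p ℓ ∧ g₁ x = Sum.inr ℓ := by
      rcases hx' with ⟨p', ℓ', hq, hℓeq, hI⟩ | ⟨p', ℓ', hq, hℓeq, hI⟩
      · exact absurd hℓeq (by simp)
      · obtain rfl : p' = p := by simpa using hℓeq.symm
        exact ⟨ℓ', hI, hq⟩
    obtain ⟨ℓ', hℓ'p, hg₂y⟩ : ∃ m : L, Q.I p m ∧ g₂ y = Sum.inr m := by
      rcases hy' with ⟨p', m', hq, hℓeq, hI⟩ | ⟨p', m', hq, hℓeq, hI⟩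
      · exact absurd hℓeq (by simp)
      · obtain rfl : p' = p := by simpa using hℓeq.symm
        exact ⟨m', hI, hq⟩
    obtain ⟨h, hhaut, hhC, hhp, hhℓ⟩ := h2 ℓ ℓ' hℓp hℓ'p
    refine ⟨g₁.trans (h.trans g₂.symm), ?_, ?_, ?_⟩
    · intro a b
      have e1 := hg₂aut.symm (h (g₁ a)) (h (g₁ b))
      have e2 := hhaut (g₁ a) (g₁ b)
      have e3 := hg₁aut a b
      simpa [Equiv.trans_apply] using e1.trans (e2.trans e3)
    · intro v
      calc g₂.symm (h (g₁ v)) ∈ C ↔ g₂ (g₂.symm (h (g₁ v))) ∈ C := (hg₂C _).symm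
        _ ↔ h (g₁ v) ∈ C := by rw [Equiv.apply_symm_apply]
        _ ↔ g₁ v ∈ C := hhC _
        _ ↔ v ∈ C := hg₁C _
    · show g₂.symm (h (g₁ x)) = y
      rw [hg₁x, hhℓ, ← hg₂y, Equiv.symm_apply_apply]
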